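/- For all indices i, j, the partial derivative of the marginal-utility loss L with respect to s i j equals -(1/M) · (τr i j − 2·q i j·τc i j) · q i j · (1 − q i j); formally, the function t ↦ L(s with the (i,j) entry replaced by t) has derivative -(1/M)·(τr i j − 2·σ(s i j)·τc i j)·σ(s i j)·(1 − σ(s i j)) at the point s i j. -/

import Mathlib

/-- The sigmoid function. -/
noncomputable def sigm (t : ℝ) : ℝ := 1 / (1 + Real.exp (-t))

lemma sigm_hasDerivAt (t : ℝ) :
    HasDerivAt sigm (sigm t * (1 - sigm t)) t := by
  have hd : (0:ℝ) < 1 + Real.exp (-t) := by positivity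
  have h1 : HasDerivAt (fun t : ℝ => 1 + Real.exp (-t)) (-Real.exp (-t)) t := by
    simpa using ((Real.hasDerivAt_exp (-t)).comp t ((hasDerivAt_id t).neg)).const_add 1
  have h2 : HasDerivAt (fun t : ℝ => 1 / (1 + Real.exp (-t)))
      (Real.exp (-t) / (1 + Real.exp (-t)) ^ 2) t := by
    have := (hasDerivAt_const t (1:ℝ)).div h1 hd.ne'
    simpa [Pi.div_def] using this
  have heq : Real.exp (-t) / (1 + Real.exp (-t)) ^ 2 = sigm t * (1 - sigm t) := by
    unfold sigm
    field_simp
    trace_state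
    ring
  rw [← heq]
  exact h2

/-- partial derivative of the marginal-utility loss with respect
to the coordinate `s i j`. -/
theorem marginal_utility_partial_deriv
    (M K : ℕ) (hM : 0 < M) (hK : 0 < K)
    (s τr τc : Fin M → Fin K → ℝ)
    (L : (Fin M → Fin K → ℝ) → ℝ)
    (hL : L = fun u : Fin M → Fin K → ℝ => -(1 / (M : ℝ)) *
      ∑ i, ∑ j, (sigm (u i j) * τr i j - (sigm (u i j)) ^ 2 * τc i j))
    (i : Fin M) (j : Fin K) :
    HasDerivAt
      (fun t : ℝ => L (Function.update s i (Function.update (s i) j t)))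
      (-(1 / (M : ℝ)) * (τr i j - 2 * sigm (s i j) * τc i j)
        * sigm (s i j) * (1 - sigm (s i j)))
      (s i j) := by
  set C : ℝ := (∑ i' ∈ (Finset.univ.erase i), ∑ j', (sigm (s i' j') * τr i' j'
      - (sigm (s i' j')) ^ 2 * τc i' j'))
    + ∑ j' ∈ (Finset.univ.erase j), (sigm (s i j') * τr i j'
      - (sigm (s i j')) ^ 2 * τc i j') with hC
  have hfun : (fun t : ℝ => L (Function.update s i (Function.update (s i) j t)))
      = fun t : ℝ => -(1 / (M : ℝ)) *
        ((sigm t * τr i j - (sigm t) ^ 2 * τc i j) + C) := by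
    funext t
    rw [hL]
    simp only
    congr 1
    rw [← Finset.add_sum_erase _ _ (Finset.mem_univ i)]
    rw [show (∑ j', (sigm (Function.update s i (Function.update (s i) j t) i j') * τr i j'
        - (sigm (Function.update s i (Function.update (s i) j t) i j')) ^ 2 * τc i j'))
      = (sigm t * τr i j - (sigm t) ^ 2 * τc i j)
        + ∑ j' ∈ (Finset.univ.erase j), (sigm (s i j') * τr i j'
          - (sigm (s i j')) ^ 2 * τc i j') from ?_]
    · rw [hC]
      have : ∀ i' ∈ Finset.univ.erase i,
          (∑ j', (sigm (Function.update s i (Function.update (s i) j t) i' j') * τr i' j'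
            - (sigm (Function.update s i (Function.update (s i) j t) i' j')) ^ 2 * τc i' j'))
          = ∑ j', (sigm (s i' j') * τr i' j' - (sigm (s i' j')) ^ 2 * τc i' j') := by
        intro i' hi'
        have hne : i' ≠ i := Finset.ne_of_mem_erase hi'
        simp [Function.update_of_ne hne]
      rw [Finset.sum_congr rfl this]
      ring
    · rw [← Finset.add_sum_erase _ _ (Finset.mem_univ j)]
      simp only [Function.update_self]
      congr 1
      apply Finset.sum_congr rfl
      intro j' hj'
      have hne : j' ≠ j := Finset.ne_of_mem_erase hj'
      simp [Function.update_of_ne hne]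
  rw [hfun]
  have hσ := sigm_hasDerivAt (s i j)
  have h1 : HasDerivAt (fun t : ℝ => (sigm t * τr i j - (sigm t) ^ 2 * τc i j) + C)
      (sigm (s i j) * (1 - sigm (s i j)) * τr i j
        - 2 * sigm (s i j) * (sigm (s i j) * (1 - sigm (s i j))) * τc i j) (s i j) := by
    have := ((hσ.mul_const (τr i j)).sub (((hσ.pow 2)).mul_const (τc i j))).add_const C
    exact this.congr_deriv (by push_cast; ring)
  have := h1.const_mul (-(1 / (M : ℝ)))
  exact this.congr_deriv (by ring)
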